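/- Let g : [0, π/3] → ℝ be continuous, strictly positive, differentiable on (0, π/3), and possess a one-sided derivative g′₊(0) at 0 and g′₋(π/3) at π/3. Fix k ≠ −1/2 and consider the restriction h(ε) = G(1 + ε, −1/2 + kε) of G = q/g(θ) to a line through the point (S₁,S₂) = (1, −1/2), which lies on the axis θ = 0. Then h has one-sided derivatives at ε = 0 given by h′±(0) = 3/(2g(0)) ∓ (√3/2)·|1 + 2k|·g′₊(0)/g(0)². Consequently the convexity condition h′₋(0) ≤ h′₊(0) holds for every such line if and only if g′₊(0) ≤ 0. -/

import Mathlib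

/-- The deviatoric stress invariant q(S₁,S₂) = √(3(S₁² + S₁S₂ + S₂²)), with S₃ = −S₁−S₂. -/
noncomputable def qf (S : ℝ × ℝ) : ℝ :=
  Real.sqrt (3 * (S.1 ^ 2 + S.1 * S.2 + S.2 ^ 2))

/-- The Lode angle θ(S₁,S₂) = (1/3)·arccos((27/2)·S₁S₂S₃/q³) ∈ [0, π/3], S₃ = −S₁−S₂. -/
noncomputable def θf (S : ℝ × ℝ) : ℝ :=
  (1 / 3) * Real.arccos ((27 / 2) * (S.1 * S.2 * (-S.1 - S.2)) / (qf S) ^ 3)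

/-- The deviatoric yield function G(S₁,S₂) = q(S₁,S₂)/g(θ(S₁,S₂)) (equal to 0 at the
origin, where q = 0). -/
noncomputable def Gf (g : ℝ → ℝ) (S : ℝ × ℝ) : ℝ :=
  qf S / g (θf S)

/-- q² along the line, as a polynomial. -/
noncomputable def P2a (k ε : ℝ) : ℝ := 9/4 + 9/2*ε + 3*(1+k+k^2)*ε^2

noncomputable def Qa (k ε : ℝ) : ℝ := Real.sqrt (P2a k ε)

noncomputable def E1a (k ε : ℝ) : ℝ := 3/2 + (1-k)*ε
noncomputable def E2a (k ε : ℝ) : ℝ := 3/2 + (2+k)*ε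

noncomputable def Fa (k σ ε : ℝ) : ℝ :=
  (3*Real.sqrt 3/2 * |1+2*k| * σ) * (ε * (E1a k ε * E2a k ε)) / (Qa k ε)^3

noncomputable def φa (k σ ε : ℝ) : ℝ := (1/3) * Real.arcsin (Fa k σ ε)

lemma P2a_pos (k ε : ℝ) (hk : k ≠ -1/2) : 0 < P2a k ε := by
  have hk' : k + 1/2 ≠ 0 := fun h => hk (by linarith)
  have h2 : 0 < (k + 1/2)^2 := by positivity
  rcases eq_or_ne ε 0 with rfl | hε
  · norm_num [P2a]
  · have h3 : 0 < ε^2 := by positivity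
    have : P2a k ε = (3/2 + 3/2*ε)^2 + 3*(k+1/2)^2*ε^2 := by unfold P2a; ring
    rw [this]
    nlinarith [sq_nonneg (3/2 + 3/2*ε)]

lemma Qa_pos (k ε : ℝ) (hk : k ≠ -1/2) : 0 < Qa k ε :=
  Real.sqrt_pos.2 (P2a_pos k ε hk)

lemma Qa_sq (k ε : ℝ) (hk : k ≠ -1/2) : (Qa k ε)^2 = P2a k ε :=
  Real.sq_sqrt (P2a_pos k ε hk).le

lemma Qa_zero (k : ℝ) : Qa k 0 = 3/2 := by
  unfold Qa P2a
  rw [show (9/4 : ℝ) + 9/2*0 + 3*(1+k+k^2)*0^2 = (3/2)^2 by ring]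
  exact Real.sqrt_sq (by norm_num)

lemma Qa_deriv (k : ℝ) : HasDerivAt (Qa k) (3/2) 0 := by
  have hP2d : HasDerivAt (fun ε => P2a k ε) (9/2) 0 := by
    have := (((hasDerivAt_id (0:ℝ)).const_mul (9/2:ℝ)).const_add (9/4)).add
      ((hasDerivAt_pow 2 (0:ℝ)).const_mul (3*(1+k+k^2)))
    exact this.congr_deriv (by norm_num)
  have hne : P2a k 0 ≠ 0 := by norm_num [P2a]
  have := (Real.hasDerivAt_sqrt hne).comp 0 hP2d
  have hv : Real.sqrt (P2a k 0) = 3/2 := Qa_zero k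
  refine this.congr_deriv ?_
  rw [hv]; norm_num

lemma Fa_zero (k σ : ℝ) : Fa k σ 0 = 0 := by simp [Fa]

lemma Fa_deriv (k σ : ℝ) : HasDerivAt (Fa k σ) (Real.sqrt 3 * |1+2*k| * σ) 0 := by
  have hE1 : HasDerivAt (fun ε => E1a k ε) (1-k) 0 := by
    simpa [E1a] using ((hasDerivAt_id (0:ℝ)).const_mul (1-k)).const_add (3/2 : ℝ)
  have hE2 : HasDerivAt (fun ε => E2a k ε) (2+k) 0 := by
    simpa [E2a] using ((hasDerivAt_id (0:ℝ)).const_mul (2+k)).const_add (3/2 : ℝ)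
  have hnum : HasDerivAt (fun ε => ε * (E1a k ε * E2a k ε)) (9/4) 0 := by
    have h := (hasDerivAt_id (0:ℝ)).mul (hE1.mul hE2)
    refine h.congr_deriv ?_
    norm_num [E1a, E2a]
  have hden : HasDerivAt (fun ε => (Qa k ε)^3) (3*(3/2)^2*(3/2)) 0 := by
    have := (Qa_deriv k).pow 3
    norm_num [Qa_zero] at this
    refine this.congr_deriv ?_
    norm_num
  have hdne : (fun ε => (Qa k ε)^3) 0 ≠ 0 := by
    simp only [Qa_zero]; norm_num
  have h := (hnum.const_mul (3*Real.sqrt 3/2 * |1+2*k| * σ)).div hden hdne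
  have heq : HasDerivAt (Fa k σ) _ 0 := h
  convert heq using 1
  simp only [Qa_zero, E1a, E2a]
  norm_num
  ring

lemma φa_zero (k σ : ℝ) : φa k σ 0 = 0 := by simp [φa, Fa_zero]

lemma φa_deriv (k σ : ℝ) :
    HasDerivAt (φa k σ) (Real.sqrt 3 * |1+2*k| * σ / 3) 0 := by
  have ha : HasDerivAt Real.arcsin (1/Real.sqrt (1-0^2)) (Fa k σ 0) := by
    rw [Fa_zero]; exact Real.hasDerivAt_arcsin (by norm_num) (by norm_num)
  have h := (ha.comp 0 (Fa_deriv k σ)).const_mul (1/3 : ℝ)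
  have heq : HasDerivAt (φa k σ) _ 0 := h
  convert heq using 1
  norm_num
  ring

lemma Fa_nonneg (k σ ε : ℝ) (hσε : 0 ≤ σ*ε) (h1 : 0 ≤ E1a k ε) (h2 : 0 ≤ E2a k ε) :
    0 ≤ Fa k σ ε := by
  have h : Fa k σ ε = (3*Real.sqrt 3/2 * |1+2*k|) * ((σ*ε) * (E1a k ε * E2a k ε)) / (Qa k ε)^3 := by
    unfold Fa; ring
  rw [h]
  apply div_nonneg
  · exact mul_nonneg (by positivity) (mul_nonneg hσε (mul_nonneg h1 h2))
  · exact pow_nonneg (Real.sqrt_nonneg _) 3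

lemma q_eq (k ε : ℝ) : qf (1+ε, -1/2+k*ε) = Qa k ε := by
  unfold qf Qa P2a
  congr 1
  ring

lemma theta_eq (k σ ε : ℝ) (hk : k ≠ -1/2) (hσ : σ^2 = 1) (hσε : 0 ≤ σ*ε)
    (h1 : 0 < E1a k ε) (h2 : 0 < E2a k ε)
    (hN : 0 ≤ (1+ε)*(-1/2+k*ε)*(-(1+ε)-(-1/2+k*ε))) :
    θf (1+ε, -1/2+k*ε) = φa k σ ε := by
  have hq := q_eq k ε
  have hQp := Qa_pos k ε hk
  have hQ2 := Qa_sq k ε hk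
  show (1/3) * Real.arccos (27/2 * ((1+ε) * (-1/2+k*ε) * (-(1+ε) - (-1/2+k*ε)))
      / (qf (1+ε, -1/2+k*ε))^3) = φa k σ ε
  rw [hq]
  unfold φa
  congr 1
  set N := (1+ε) * (-1/2+k*ε) * (-(1+ε) - (-1/2+k*ε)) with hNdef
  have hA0 : 0 ≤ 27/2*N/(Qa k ε)^3 :=
    div_nonneg (by linarith) (by positivity)
  rw [Real.arccos_eq_arcsin hA0]
  congr 1
  have hFnn : 0 ≤ Fa k σ ε := Fa_nonneg k σ ε hσε h1.le h2.le
  have key : (P2a k ε)^3 - (27/2*N)^2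
      = ((3*Real.sqrt 3/2 * |1+2*k| * σ) * (ε * (E1a k ε * E2a k ε)))^2 := by
    have h3 : Real.sqrt 3^2 = 3 := Real.sq_sqrt (by norm_num)
    have expand : ((3*Real.sqrt 3/2 * |1+2*k| * σ) * (ε * (E1a k ε * E2a k ε)))^2
        = (9/4)*(Real.sqrt 3^2)*(|1+2*k|^2)*(σ^2)*(ε * (E1a k ε * E2a k ε))^2 := by ring
    rw [expand, h3, sq_abs, hσ]
    simp only [P2a, E1a, E2a, hNdef]
    ring
  have hQ32 : ((Qa k ε)^3)^2 = (P2a k ε)^3 := by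
    rw [show ((Qa k ε)^3)^2 = ((Qa k ε)^2)^3 by ring, hQ2]
  have hA2 : (27/2*N/(Qa k ε)^3)^2 = (27/2*N)^2/(P2a k ε)^3 := by
    rw [div_pow, hQ32]
  have hF2 : (Fa k σ ε)^2 = ((3*Real.sqrt 3/2 * |1+2*k| * σ) * (ε * (E1a k ε * E2a k ε)))^2
      / (P2a k ε)^3 := by
    unfold Fa
    rw [div_pow, hQ32]
  have hP3 : (P2a k ε)^3 ≠ 0 := (pow_pos (P2a_pos k ε hk) 3).ne'
  have h1A : 1 - (27/2*N/(Qa k ε)^3)^2 = (Fa k σ ε)^2 := by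
    rw [hA2, hF2, ← key]
    field_simp
    rw [sub_div, mul_div_cancel_right₀ _ hP3]
  rw [h1A, Real.sqrt_sq hFnn]

lemma corner_side (g : ℝ → ℝ) (hg0 : 0 < g 0)
    (gd0 : ℝ) (h0 : HasDerivWithinAt g gd0 (Set.Ici 0) 0)
    (k : ℝ) (hk : k ≠ -1/2) (σ : ℝ) (hσ : σ^2 = 1)
    (s : Set ℝ) (hs : ∀ ε ∈ s, 0 ≤ σ * ε) :
    HasDerivWithinAt (fun ε : ℝ => Gf g (1 + ε, -1/2 + k * ε))
      (3 / (2 * g 0) - σ * ((Real.sqrt 3 / 2) * |1 + 2*k| * gd0 / (g 0)^2)) s 0 := by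
  have hc1 : ContinuousAt (fun ε : ℝ => E1a k ε) 0 := by unfold E1a; fun_prop
  have hc2 : ContinuousAt (fun ε : ℝ => E2a k ε) 0 := by unfold E2a; fun_prop
  have hc3 : ContinuousAt (fun ε : ℝ => (1+ε)*(-1/2+k*ε)*(-(1+ε)-(-1/2+k*ε))) 0 := by fun_prop
  have hv1 : ∀ᶠ ε in nhds (0:ℝ), 0 < E1a k ε :=
    hc1.eventually (eventually_gt_nhds (by norm_num [E1a]))
  have hv2 : ∀ᶠ ε in nhds (0:ℝ), 0 < E2a k ε :=
    hc2.eventually (eventually_gt_nhds (by norm_num [E2a]))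
  have hv3 : ∀ᶠ ε in nhds (0:ℝ), 0 < (1+ε)*(-1/2+k*ε)*(-(1+ε)-(-1/2+k*ε)) :=
    hc3.eventually (eventually_gt_nhds (by norm_num))
  have hV : ∀ᶠ ε in nhds (0:ℝ),
      0 < E1a k ε ∧ 0 < E2a k ε ∧ 0 ≤ (1+ε)*(-1/2+k*ε)*(-(1+ε)-(-1/2+k*ε)) :=
    hv1.and (hv2.and (hv3.mono fun ε h => h.le))
  set V : Set ℝ := {ε : ℝ | 0 < E1a k ε ∧ 0 < E2a k ε ∧
      0 ≤ (1+ε)*(-1/2+k*ε)*(-(1+ε)-(-1/2+k*ε))} with hVdef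
  have hVmem : V ∈ nhds (0:ℝ) := hV
  have hs' : s ∩ V ∈ nhdsWithin 0 s :=
    Filter.inter_mem self_mem_nhdsWithin (mem_nhdsWithin_of_mem_nhds hVmem)
  have hφd : HasDerivWithinAt (φa k σ) (Real.sqrt 3 * |1+2*k| * σ / 3) (s ∩ V) 0 :=
    (φa_deriv k σ).hasDerivWithinAt
  have hmap : Set.MapsTo (φa k σ) (s ∩ V) (Set.Ici (0:ℝ)) := by
    rintro ε ⟨hεs, hE1, hE2, hNε⟩
    have hF := Fa_nonneg k σ ε (hs ε hεs) hE1.le hE2.le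
    have harc : 0 ≤ Real.arcsin (Fa k σ ε) := Real.arcsin_nonneg.2 hF
    have : (0:ℝ) ≤ φa k σ ε := mul_nonneg (by norm_num) harc
    exact Set.mem_Ici.2 this
  have hg' : HasDerivWithinAt g gd0 (Set.Ici 0) (φa k σ 0) := by rw [φa_zero]; exact h0
  have hcomp : HasDerivWithinAt (fun ε => g (φa k σ ε))
      (gd0 * (Real.sqrt 3 * |1+2*k| * σ / 3)) (s ∩ V) 0 :=
    HasDerivWithinAt.comp (x := 0) hg' hφd hmap
  have hgφ0 : g (φa k σ 0) ≠ 0 := by rw [φa_zero]; exact hg0.ne'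
  have hQd : HasDerivWithinAt (Qa k) (3/2) (s ∩ V) 0 := (Qa_deriv k).hasDerivWithinAt
  have hH := hQd.div hcomp hgφ0
  have heq : ∀ ε ∈ s ∩ V, Gf g (1+ε, -1/2+k*ε) = Qa k ε / g (φa k σ ε) := by
    rintro ε ⟨hεs, hE1, hE2, hNε⟩
    unfold Gf
    rw [q_eq, theta_eq k σ ε hk hσ (hs ε hεs) hE1 hE2 hNε]
  have h00 : Gf g (1+(0:ℝ), -1/2+k*0) = Qa k 0 / g (φa k σ 0) := by
    unfold Gf
    rw [q_eq, theta_eq k σ 0 hk hσ (by norm_num) (by norm_num [E1a]) (by norm_num [E2a])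
      (by norm_num)]
  have hG : HasDerivWithinAt (fun ε : ℝ => Gf g (1+ε, -1/2+k*ε)) _ (s ∩ V) 0 :=
    hH.congr heq h00
  have hG2 := hG.mono_of_mem_nhdsWithin hs'
  refine hG2.congr_deriv ?_
  rw [φa_zero, Qa_zero]
  field_simp

/-- One-sided derivatives of the restriction h(ε) = G(1+ε, −1/2+kε) of
G = q/g(θ) to a line through the point (1,−1/2) (on the axis θ = 0), for k ≠ −1/2:
h′±(0) = 3/(2g(0)) ∓ (√3/2)·|1+2k|·g′₊(0)/g(0)²; consequently h′₋(0) ≤ h′₊(0) holds for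
every such line iff g′₊(0) ≤ 0. -/
theorem corner_at_theta_zero
    (g : ℝ → ℝ)
    (hgc : ContinuousOn g (Set.Icc 0 (Real.pi / 3)))
    (hgpos : ∀ t ∈ Set.Icc 0 (Real.pi / 3), 0 < g t)
    (hgd : ∀ t ∈ Set.Ioo 0 (Real.pi / 3), DifferentiableAt ℝ g t)
    (gd0 gdpi : ℝ)
    (h0 : HasDerivWithinAt g gd0 (Set.Ici 0) 0)
    (hpi : HasDerivWithinAt g gdpi (Set.Iic (Real.pi / 3)) (Real.pi / 3))
    (k : ℝ) (hk : k ≠ -1 / 2) :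
    HasDerivWithinAt (fun ε : ℝ => Gf g (1 + ε, -1 / 2 + k * ε))
      (3 / (2 * g 0) - (Real.sqrt 3 / 2) * |1 + 2 * k| * gd0 / (g 0) ^ 2)
      (Set.Ici 0) 0 ∧
    HasDerivWithinAt (fun ε : ℝ => Gf g (1 + ε, -1 / 2 + k * ε))
      (3 / (2 * g 0) + (Real.sqrt 3 / 2) * |1 + 2 * k| * gd0 / (g 0) ^ 2)
      (Set.Iic 0) 0 ∧
    ((∀ k' : ℝ, k' ≠ -1 / 2 →
        3 / (2 * g 0) + (Real.sqrt 3 / 2) * |1 + 2 * k'| * gd0 / (g 0) ^ 2 ≤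
        3 / (2 * g 0) - (Real.sqrt 3 / 2) * |1 + 2 * k'| * gd0 / (g 0) ^ 2) ↔
      gd0 ≤ 0) := by
  have hg0 : 0 < g 0 := hgpos 0 ⟨le_rfl, by positivity⟩
  refine ⟨?_, ?_, ?_⟩
  · have h := corner_side g hg0 gd0 h0 k hk 1 (by norm_num) (Set.Ici 0)
      (fun ε hε => by simpa using hε)
    convert h using 1
    ring
  · have h := corner_side g hg0 gd0 h0 k hk (-1) (by norm_num) (Set.Iic 0)
      (fun ε hε => by simpa using hε)
    convert h using 1
    ring
  · constructor
    · intro H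
      have h := H 0 (by norm_num)
      have h3 : (0:ℝ) < Real.sqrt 3 := by positivity
      have hg2 : (0:ℝ) < (g 0)^2 := by positivity
      norm_num at h
      by_contra hpos
      push_neg at hpos
      have hd : 0 < Real.sqrt 3 / 2 * gd0 / (g 0)^2 := by positivity
      linarith
    · intro hgd0 k' _
      have hnn : (0:ℝ) ≤ Real.sqrt 3 / 2 * |1 + 2 * k'| := by positivity
      have hterm : Real.sqrt 3 / 2 * |1 + 2 * k'| * gd0 / (g 0)^2 ≤ 0 :=
        div_nonpos_of_nonpos_of_nonneg (mul_nonpos_of_nonneg_of_nonpos hnn hgd0)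
          (sq_nonneg _)
      linarith
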